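/- Bourgain's sum-product lemma: Let p be prime and A, B ⊆ Z_p finite sets with (A − A) ∩ (B − B) ≠ {0}. Then there exist a subset B₁ ⊆ B, a subset Z ⊆ (A − A) ∩ (B − B), and elements a₁,…,a₆ ∈ A, b₁,…,b₆ ∈ B such that |(b₁−b₂)A + (a₁−a₂+a₃−a₄)B₁ + (a₅−a₆+b₃−b₄+b₅−b₆)Z| ≥ (1/2) min{|A||B|, p − 1}. -/

import Mathlib

open Finset Pointwise

section Aux

variable {K : Type*} [Field K] [DecidableEq K]

private lemma smul_finset_add' (u : K) (S T : Finset K) : u • (S + T) = u • S + u • T := by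
  ext x
  simp only [Finset.mem_smul_finset, Finset.mem_add, smul_eq_mul]
  constructor
  · rintro ⟨y, ⟨a, ha, b, hb, rfl⟩, rfl⟩
    exact ⟨u * a, ⟨a, ha, rfl⟩, u * b, ⟨b, hb, rfl⟩, by ring⟩
  · rintro ⟨y1, ⟨a, ha, rfl⟩, y2, ⟨b, hb, rfl⟩, rfl⟩
    exact ⟨a + b, ⟨a, ha, b, hb, rfl⟩, by ring⟩

private lemma smul_smul_finset' (a b : K) (S : Finset K) : a • (b • S) = (a * b) • S := by
  ext x
  simp only [Finset.mem_smul_finset, smul_eq_mul]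
  constructor
  · rintro ⟨y, ⟨t, ht, rfl⟩, rfl⟩
    exact ⟨t, ht, by ring⟩
  · rintro ⟨t, ht, rfl⟩
    exact ⟨b * t, ⟨t, ht, rfl⟩, by ring⟩

private lemma card_smul_finset' {u : K} (hu : u ≠ 0) (S : Finset K) : (u • S).card = S.card := by
  rw [Finset.smul_finset_def]
  apply Finset.card_image_of_injective
  intro x y h
  simp only [smul_eq_mul] at h
  exact mul_left_cancel₀ hu h

/-- Greedy extraction of a `W`-independent subset. -/
private lemma greedy_indep (W B : Finset K) (h0 : (0:K) ∈ W)
    (hsym : ∀ x ∈ W, -x ∈ W) (m : ℕ)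
    (hm : ∀ b ∈ B, (B.filter fun b' => b' - b ∈ W).card ≤ m) :
    ∀ n : ℕ, ∀ S : Finset K, S ⊆ B → S.card ≤ n →
      ∃ B₁, B₁ ⊆ S ∧ (∀ b ∈ B₁, ∀ b' ∈ B₁, b ≠ b' → b - b' ∉ W) ∧ S.card ≤ m * B₁.card := by
  intro n
  induction n with
  | zero =>
    intro S _ hS
    exact ⟨∅, by simp, by simp, by simpa using hS⟩
  | succ n ih =>
    intro S hSB hS
    rcases S.eq_empty_or_nonempty with rfl | ⟨b, hb⟩
    · exact ⟨∅, by simp, by simp, by simp⟩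
    · set S' := S.filter (fun b' => b' - b ∉ W) with hS'def
      have hb_not : b ∉ S' := by
        simp [hS'def, sub_self, h0]
      have hcard' : S'.card ≤ n := by
        have hlt : S'.card < S.card :=
          Finset.card_lt_card ⟨Finset.filter_subset _ _, fun hsub => hb_not (hsub hb)⟩
        omega
      obtain ⟨B₁, hB₁S, hind, hcount⟩ := ih S' ((Finset.filter_subset _ _).trans hSB) hcard'
      have hbB₁ : b ∉ B₁ := fun h => hb_not (hB₁S h)
      refine ⟨insert b B₁, ?_, ?_, ?_⟩
      · intro x hx
        rcases Finset.mem_insert.mp hx with rfl | hx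
        · exact hb
        · exact (Finset.filter_subset _ _) (hB₁S hx)
      · intro x hx y hy hxy
        rcases Finset.mem_insert.mp hx with rfl | hx'
        · rcases Finset.mem_insert.mp hy with rfl | hy'
          · exact absurd rfl hxy
          · intro hW
            exact (Finset.mem_filter.mp (hB₁S hy')).2 (by simpa using hsym _ hW)
        · rcases Finset.mem_insert.mp hy with rfl | hy'
          · exact (Finset.mem_filter.mp (hB₁S hx')).2
          · exact hind x hx' y hy' hxy
      · rw [Finset.card_insert_of_notMem hbB₁]
        have hsplit : (S.filter (fun b' => b' - b ∈ W)).card + S'.card = S.card := by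
          simpa [hS'def] using Finset.card_filter_add_card_filter_not
            (s := S) (p := fun b' => b' - b ∈ W)
        have hrem : (S.filter (fun b' => b' - b ∈ W)).card ≤ m :=
          le_trans (Finset.card_le_card (Finset.filter_subset_filter _ hSB)) (hm b (hSB hb))
        have := hcount
        have hmul : m * (B₁.card + 1) = m * B₁.card + m := by ring
        omega

/-- Perfect pair sumset. -/
private lemma card_add_of_inj (A B : Finset K)
    (h : ∀ a ∈ A, ∀ b ∈ B, ∀ a' ∈ A, ∀ b' ∈ B, a + b = a' + b' → a = a' ∧ b = b') :
    (A + B).card = A.card * B.card := by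
  have himg : A + B = (A ×ˢ B).image (fun q => q.1 + q.2) := by
    ext s
    simp only [Finset.mem_add, Finset.mem_image, Finset.mem_product, Prod.exists]
    constructor
    · rintro ⟨a, ha, b, hb, rfl⟩
      exact ⟨a, b, ⟨ha, hb⟩, rfl⟩
    · rintro ⟨a, b, ⟨ha, hb⟩, rfl⟩
      exact ⟨a, ha, b, hb, rfl⟩
  rw [himg, Finset.card_image_of_injOn, Finset.card_product]
  rintro ⟨a, b⟩ hab ⟨a', b'⟩ hab' heq
  simp only [Finset.coe_product, Set.mem_prod, Finset.mem_coe] at hab hab'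
  obtain ⟨h1, h2⟩ := h a hab.1 b hab.2 a' hab'.1 b' hab'.2 heq
  simp [h1, h2]

/-- Perfect triple sumset. -/
private lemma card_triple_of_inj (u e : K) (A B₁ Z : Finset K)
    (h : ∀ a ∈ A, ∀ b ∈ B₁, ∀ t ∈ Z, ∀ a' ∈ A, ∀ b' ∈ B₁, ∀ t' ∈ Z,
      u*a + u*b + e*t = u*a' + u*b' + e*t' → a = a' ∧ b = b' ∧ t = t') :
    (u • A + u • B₁ + e • Z).card = A.card * B₁.card * Z.card := by
  have himg : u • A + u • B₁ + e • Z
      = ((A ×ˢ B₁) ×ˢ Z).image (fun q => u*q.1.1 + u*q.1.2 + e*q.2) := by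
    ext s
    simp only [Finset.mem_add, Finset.mem_image, Finset.mem_product, Finset.mem_smul_finset,
      smul_eq_mul, Prod.exists]
    constructor
    · rintro ⟨y, ⟨y1, ⟨a, ha, rfl⟩, y2, ⟨b, hb, rfl⟩, rfl⟩, y3, ⟨t, ht, rfl⟩, rfl⟩
      exact ⟨a, b, t, ⟨⟨ha, hb⟩, ht⟩, rfl⟩
    · rintro ⟨a, b, t, ⟨⟨ha, hb⟩, ht⟩, rfl⟩
      exact ⟨_, ⟨_, ⟨a, ha, rfl⟩, _, ⟨b, hb, rfl⟩, rfl⟩, _, ⟨t, ht, rfl⟩, rfl⟩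
  rw [himg, Finset.card_image_of_injOn, Finset.card_product, Finset.card_product]
  rintro ⟨⟨a, b⟩, t⟩ hq ⟨⟨a', b'⟩, t'⟩ hq' heq
  simp only [Finset.coe_product, Set.mem_prod, Finset.mem_coe] at hq hq'
  obtain ⟨h1, h2, h3⟩ := h a hq.1.1 b hq.1.2 t hq.2 a' hq'.1.1 b' hq'.1.2 t' hq'.2 heq
  simp [h1, h2, h3]

end Aux

/-- The Cauchy–Schwarz averaging lemma over all nonzero dilates. -/
private lemma avg_lemma (p : ℕ) [Fact p.Prime] (T Z : Finset (ZMod p))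
    (hT : T.Nonempty) (hZ : Z.Nonempty) :
    ∃ ξ : ZMod p, ξ ≠ 0 ∧
      (1 / 2 : ℝ) * min ((T.card : ℝ) * Z.card) ((p : ℝ) - 1) ≤ ((T + ξ • Z).card : ℝ) := by
  haveI : NeZero p := ⟨(Fact.out : p.Prime).ne_zero⟩
  have hp2 : 2 ≤ p := (Fact.out : p.Prime).two_le
  classical
  set Qset : Finset ((ZMod p × ZMod p) × (ZMod p × ZMod p)) := (T ×ˢ Z) ×ˢ (T ×ˢ Z) with hQdef
  set E : ZMod p → ℕ :=
    fun ξ => (Qset.filter (fun q => q.1.1 + ξ * q.1.2 = q.2.1 + ξ * q.2.2)).card with hEdef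
  set s0 : Finset (ZMod p) := Finset.univ.erase 0 with hs0def
  have hs0card : s0.card = p - 1 := by
    rw [hs0def, Finset.card_erase_of_mem (Finset.mem_univ 0), Finset.card_univ, ZMod.card]
  -- Claim 1 : Cauchy-Schwarz
  have claim1 : ∀ ξ : ZMod p, (T.card * Z.card)^2 ≤ (T + ξ • Z).card * E ξ := by
    intro ξ
    set r : ZMod p → ℕ := fun s => ((T ×ˢ Z).filter (fun q => q.1 + ξ * q.2 = s)).card with hrdef
    have hmap : ∀ q ∈ T ×ˢ Z, q.1 + ξ * q.2 ∈ T + ξ • Z := by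
      rintro ⟨x, zz⟩ hq
      rw [Finset.mem_product] at hq
      exact Finset.mem_add.mpr ⟨x, hq.1, ξ * zz,
        Finset.mem_smul_finset.mpr ⟨zz, hq.2, by simp [smul_eq_mul]⟩, rfl⟩
    have hsum : ∑ s ∈ T + ξ • Z, r s = T.card * Z.card := by
      rw [← Finset.card_product]
      exact (Finset.card_eq_sum_card_fiberwise hmap).symm
    have hsumsq : ∑ s ∈ T + ξ • Z, (r s)^2 = E ξ := by
      have hmap2 : ∀ q ∈ Qset.filter (fun q => q.1.1 + ξ * q.1.2 = q.2.1 + ξ * q.2.2),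
          q.1.1 + ξ * q.1.2 ∈ T + ξ • Z := by
        intro q hq
        rw [Finset.mem_filter, hQdef, Finset.mem_product] at hq
        exact hmap q.1 hq.1.1
      have hE' : E ξ = (Qset.filter (fun q => q.1.1 + ξ * q.1.2 = q.2.1 + ξ * q.2.2)).card := rfl
      rw [hE', Finset.card_eq_sum_card_fiberwise hmap2]
      apply Finset.sum_congr rfl
      intro s hs
      rw [Finset.filter_filter]
      have : (Qset.filter (fun q => (q.1.1 + ξ * q.1.2 = q.2.1 + ξ * q.2.2) ∧
          q.1.1 + ξ * q.1.2 = s)) =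
          ((T ×ˢ Z).filter (fun q => q.1 + ξ * q.2 = s)) ×ˢ
          ((T ×ˢ Z).filter (fun q => q.1 + ξ * q.2 = s)) := by
        rw [hQdef, ← Finset.filter_product]
        apply Finset.filter_congr
        intro q _
        constructor
        · rintro ⟨h1, h2⟩
          exact ⟨h2, by rw [← h1]; exact h2⟩
        · rintro ⟨h1, h2⟩
          exact ⟨h1.trans h2.symm, h1⟩
      rw [this, Finset.card_product, sq]
    calc (T.card * Z.card)^2 = (∑ s ∈ T + ξ • Z, r s)^2 := by rw [hsum]
      _ ≤ (T + ξ • Z).card * ∑ s ∈ T + ξ • Z, (r s)^2 := sq_sum_le_card_mul_sum_sq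
      _ = (T + ξ • Z).card * E ξ := by rw [hsumsq]
  -- Claim 2 : total energy bound
  have claim2 : ∑ ξ ∈ s0, E ξ ≤ (T.card * Z.card) * (p - 1) + (T.card * Z.card)^2 := by
    have hswap : ∑ ξ ∈ s0, E ξ
        = ∑ q ∈ Qset, (s0.filter (fun ξ => q.1.1 + ξ * q.1.2 = q.2.1 + ξ * q.2.2)).card := by
      simp only [hEdef, Finset.card_filter]
      rw [Finset.sum_comm]
    rw [hswap, ← Finset.sum_filter_add_sum_filter_not Qset (fun q => q.1 = q.2)]
    have hdiag : ∑ q ∈ Qset.filter (fun q => q.1 = q.2),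
        (s0.filter (fun ξ => q.1.1 + ξ * q.1.2 = q.2.1 + ξ * q.2.2)).card
        ≤ (T.card * Z.card) * (p - 1) := by
      calc ∑ q ∈ Qset.filter (fun q => q.1 = q.2),
            (s0.filter (fun ξ => q.1.1 + ξ * q.1.2 = q.2.1 + ξ * q.2.2)).card
          ≤ ∑ _q ∈ Qset.filter (fun q => q.1 = q.2), (p - 1) :=
            Finset.sum_le_sum (fun q _ => (Finset.card_filter_le _ _).trans (le_of_eq hs0card))
        _ = (Qset.filter (fun q => q.1 = q.2)).card * (p - 1) := by
            rw [Finset.sum_const, smul_eq_mul]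
        _ ≤ (T.card * Z.card) * (p - 1) := by
            apply Nat.mul_le_mul_right
            have : (Qset.filter (fun q => q.1 = q.2)).card ≤ (T ×ˢ Z).card := by
              apply Finset.card_le_card_of_injOn (fun q => q.1)
              · intro q hq
                rw [Finset.mem_coe, Finset.mem_filter, hQdef, Finset.mem_product] at hq
                exact hq.1.1
              · intro q hq q' hq' heq
                simp only [Finset.mem_coe, Finset.mem_filter] at hq hq'
                have heq' : q.1 = q'.1 := heq
                exact Prod.ext heq' (by rw [← hq.2, ← hq'.2, heq'])
            simpa [Finset.card_product] using this
    have hoff : ∑ q ∈ Qset.filter (fun q => ¬ q.1 = q.2),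
        (s0.filter (fun ξ => q.1.1 + ξ * q.1.2 = q.2.1 + ξ * q.2.2)).card
        ≤ (T.card * Z.card)^2 := by
      calc ∑ q ∈ Qset.filter (fun q => ¬ q.1 = q.2),
            (s0.filter (fun ξ => q.1.1 + ξ * q.1.2 = q.2.1 + ξ * q.2.2)).card
          ≤ ∑ _q ∈ Qset.filter (fun q => ¬ q.1 = q.2), 1 := by
            apply Finset.sum_le_sum
            intro q hq
            rw [Finset.mem_filter] at hq
            apply Finset.card_le_one.mpr
            intro ξ₁ h₁ ξ₂ h₂
            rw [Finset.mem_filter] at h₁ h₂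
            have e₁ : ξ₁ * (q.1.2 - q.2.2) = q.2.1 - q.1.1 := by
              linear_combination h₁.2
            have e₂ : ξ₂ * (q.1.2 - q.2.2) = q.2.1 - q.1.1 := by
              linear_combination h₂.2
            by_cases hz : q.1.2 - q.2.2 = 0
            · exfalso
              have hz' : q.1.2 = q.2.2 := by
                have := sub_eq_zero.mp hz; exact this
              have hx : q.1.1 = q.2.1 := by
                have := h₁.2
                rw [hz'] at this
                exact add_right_cancel this
              exact hq.2 (Prod.ext hx hz')
            · exact mul_right_cancel₀ hz (e₁.trans e₂.symm)
        _ = (Qset.filter (fun q => ¬ q.1 = q.2)).card := by simp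
        _ ≤ Qset.card := Finset.card_filter_le _ _
        _ = (T.card * Z.card)^2 := by
            rw [hQdef]
            simp [Finset.card_product, sq]
    omega
  -- Pigeonhole
  have hpig : ∃ ξ ∈ s0, (p - 1) * E ξ
      ≤ (T.card * Z.card) * (p - 1) + (T.card * Z.card)^2 := by
    by_contra hcon
    push_neg at hcon
    set Bd := (T.card * Z.card) * (p - 1) + (T.card * Z.card)^2 with hBddef
    have hstep : ∀ ξ ∈ s0, Bd + 1 ≤ (p - 1) * E ξ := by
      intro ξ hξ
      have := hcon ξ hξ
      omega
    have hsum_lb : s0.card * (Bd + 1) ≤ ∑ ξ ∈ s0, (p - 1) * E ξ := by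
      calc s0.card * (Bd + 1) = ∑ _ξ ∈ s0, (Bd + 1) := by rw [Finset.sum_const, smul_eq_mul]
        _ ≤ ∑ ξ ∈ s0, (p - 1) * E ξ := Finset.sum_le_sum hstep
    rw [← Finset.mul_sum, hs0card] at hsum_lb
    have hle : (p - 1) * ∑ ξ ∈ s0, E ξ ≤ (p - 1) * Bd := Nat.mul_le_mul_left _ claim2
    have hexp : (p - 1) * (Bd + 1) = (p - 1) * Bd + (p - 1) := by ring
    omega
  obtain ⟨ξ, hξmem, hξE⟩ := hpig
  have hξ0 : ξ ≠ 0 := (Finset.mem_erase.mp hξmem).1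
  refine ⟨ξ, hξ0, ?_⟩
  -- Real arithmetic
  set N : ℝ := (T.card : ℝ) * Z.card with hNdef
  set P : ℝ := (p : ℝ) - 1 with hPdef
  set C : ℝ := (E ξ : ℝ) with hCdef
  set n : ℝ := ((T + ξ • Z).card : ℝ) with hndef
  have hN : 0 < N := by
    apply mul_pos <;> exact_mod_cast Finset.card_pos.mpr (by assumption)
  have hP : 0 < P := by
    rw [hPdef]
    have : (2 : ℝ) ≤ (p : ℝ) := by exact_mod_cast hp2
    linarith
  have h1 : N^2 ≤ n * C := by
    have h := claim1 ξ
    rw [hNdef, hCdef, hndef]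
    exact_mod_cast h
  have hcast : ((p - 1 : ℕ) : ℝ) = P := by
    rw [hPdef, Nat.cast_sub (by omega : 1 ≤ p), Nat.cast_one]
  have h2 : P * C ≤ N * P + N^2 := by
    have h' : ((p - 1 : ℕ) : ℝ) * C ≤ N * ((p - 1 : ℕ) : ℝ) + N^2 := by
      rw [hCdef, hNdef]
      exact_mod_cast hξE
    rwa [hcast] at h'
  have hC : 0 < C := by
    rcases lt_or_ge 0 C with h | h
    · exact h
    · exfalso
      have hn0 : 0 ≤ n := by rw [hndef]; positivity
      nlinarith [h1, sq_nonneg N, mul_pos hN hN]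
  have hn : 0 ≤ n := by rw [hndef]; positivity
  rcases le_total N P with hNP | hPN
  · rw [min_eq_left hNP]
    have hkey : N * (C * P) ≤ (2 * n) * (C * P) := by
      nlinarith [mul_le_mul_of_nonneg_left h2 hN.le, mul_le_mul_of_nonneg_right h1 hP.le,
        mul_le_mul_of_nonneg_right h1 hN.le, mul_nonneg (mul_nonneg hn hC.le) hP.le]
    have := le_of_mul_le_mul_right hkey (mul_pos hC hP)
    linarith
  · rw [min_eq_right hPN]
    have hkey : P * (C * P) ≤ (2 * n) * (C * P) := by
      nlinarith [mul_le_mul_of_nonneg_left h2 hP.le, mul_le_mul_of_nonneg_right h1 hP.le,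
        mul_nonneg (mul_nonneg hn hC.le) hP.le, mul_pos hN hP]
    have := le_of_mul_le_mul_right hkey (mul_pos hC hP)
    linarith

set_option maxHeartbeats 2000000 in
theorem bourgain_sum_product_lemma (p : ℕ) (hp : p.Prime)
    (A B : Finset (ZMod p))
    (hne : ∃ z : ZMod p, z ≠ 0 ∧ z ∈ (A - A) ∩ (B - B)) :
    ∃ B₁ ⊆ B, ∃ Z ⊆ (A - A) ∩ (B - B),
      ∃ a₁ ∈ A, ∃ a₂ ∈ A, ∃ a₃ ∈ A, ∃ a₄ ∈ A, ∃ a₅ ∈ A, ∃ a₆ ∈ A,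
      ∃ b₁ ∈ B, ∃ b₂ ∈ B, ∃ b₃ ∈ B, ∃ b₄ ∈ B, ∃ b₅ ∈ B, ∃ b₆ ∈ B,
        (1 / 2 : ℝ) * min ((A.card : ℝ) * B.card) ((p : ℝ) - 1) ≤
          ((((b₁ - b₂) • A + (a₁ - a₂ + a₃ - a₄) • B₁
              + (a₅ - a₆ + b₃ - b₄ + b₅ - b₆) • Z).card : ℕ) : ℝ) := by
  haveI hfact : Fact p.Prime := ⟨hp⟩
  haveI : NeZero p := ⟨hp.ne_zero⟩
  classical
  obtain ⟨z, hz0, hzmem⟩ := hne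
  rw [Finset.mem_inter] at hzmem
  obtain ⟨hzW, hzV⟩ := hzmem
  obtain ⟨az, haz, az', haz', hazz⟩ := Finset.mem_sub.mp hzW
  obtain ⟨bz, hbz, bz', hbz', hbzz⟩ := Finset.mem_sub.mp hzV
  have hAne : A.Nonempty := ⟨az, haz⟩
  have hBne : B.Nonempty := ⟨bz, hbz⟩
  have h0W : (0 : ZMod p) ∈ A - A := Finset.mem_sub.mpr ⟨az, haz, az, haz, sub_self az⟩
  have h0V : (0 : ZMod p) ∈ B - B := Finset.mem_sub.mpr ⟨bz, hbz, bz, hbz, sub_self bz⟩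
  have hWsym : ∀ x ∈ A - A, -x ∈ A - A := by
    intro x hx
    obtain ⟨a, ha, a', ha', rfl⟩ := Finset.mem_sub.mp hx
    exact Finset.mem_sub.mpr ⟨a', ha', a, ha, by ring⟩
  -- choose b₀ with maximal W-neighborhood in B
  obtain ⟨b₀, hb₀B, hb₀max⟩ := Finset.exists_max_image B
      (fun b => (B.filter fun b' => b' - b ∈ A - A).card) hBne
  set N₀ := B.filter (fun b' => b' - b₀ ∈ A - A) with hN₀def
  set m₀ := N₀.card with hm₀def
  set Z := N₀.image (fun b' => b' - b₀) with hZdef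
  have hZcard : Z.card = m₀ := by
    rw [hZdef]
    apply Finset.card_image_of_injOn
    intro x _ y _ h
    exact sub_left_inj.mp h
  have hZD : Z ⊆ (A - A) ∩ (B - B) := by
    intro t ht
    rw [hZdef, Finset.mem_image] at ht
    obtain ⟨b', hb', rfl⟩ := ht
    rw [hN₀def, Finset.mem_filter] at hb'
    exact Finset.mem_inter.mpr ⟨hb'.2, Finset.sub_mem_sub hb'.1 hb₀B⟩
  have hZW : ∀ t ∈ Z, t ∈ A - A := fun t ht => (Finset.mem_inter.mp (hZD ht)).1
  have hZdiffV : ∀ t ∈ Z, ∀ t' ∈ Z, t - t' ∈ B - B := by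
    intro t ht t' ht'
    rw [hZdef, Finset.mem_image] at ht ht'
    obtain ⟨c, hc, rfl⟩ := ht
    obtain ⟨c', hc', rfl⟩ := ht'
    rw [hN₀def, Finset.mem_filter] at hc hc'
    have hcc : c - b₀ - (c' - b₀) = c - c' := by ring
    rw [hcc]
    exact Finset.sub_mem_sub hc.1 hc'.1
  have hZne : Z.Nonempty := by
    refine ⟨0, ?_⟩
    rw [hZdef, Finset.mem_image]
    refine ⟨b₀, ?_, sub_self b₀⟩
    rw [hN₀def, Finset.mem_filter]
    exact ⟨hb₀B, by simpa using h0W⟩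
  -- greedy independent set B₁
  obtain ⟨B₁, hB₁B, hindep, hcount⟩ := greedy_indep (A - A) B h0W hWsym m₀
      (fun b hb => hb₀max b hb) B.card B subset_rfl le_rfl
  have hB₁ne : B₁.Nonempty := by
    rcases B₁.eq_empty_or_nonempty with h | h
    · exfalso
      rw [h, Finset.card_empty, Nat.mul_zero, Nat.le_zero] at hcount
      have hpos := Finset.card_pos.mpr hBne
      omega
    · exact h
  obtain ⟨bb, hbb⟩ := hB₁ne
  have h0B₁ : (0 : ZMod p) ∈ B₁ - B₁ := Finset.mem_sub.mpr ⟨bb, hbb, bb, hbb, sub_self bb⟩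
  -- reduce to producing u (= b-diff = sum of two a-diffs) and e (a-diff + 2 b-diffs) with a bound
  suffices h : ∃ u ∈ B - B, ∃ d₁ ∈ A - A, ∃ d₂ ∈ A - A,
      ∃ e₁ ∈ A - A, ∃ e₂ ∈ B - B, ∃ e₃ ∈ B - B,
      u = d₁ + d₂ ∧
      (1 / 2 : ℝ) * min ((A.card : ℝ) * B.card) ((p : ℝ) - 1) ≤
        (((u • A + u • B₁ + (e₁ + e₂ + e₃) • Z).card : ℕ) : ℝ) by
    obtain ⟨u, huV, d₁, hd₁, d₂, hd₂, e₁, he₁, e₂, he₂, e₃, he₃, hud, hbound⟩ := h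
    obtain ⟨a₁, ha₁, a₂, ha₂, hda⟩ := Finset.mem_sub.mp hd₁
    obtain ⟨a₃, ha₃, a₄, ha₄, hdb⟩ := Finset.mem_sub.mp hd₂
    obtain ⟨a₅, ha₅, a₆, ha₆, hea⟩ := Finset.mem_sub.mp he₁
    obtain ⟨b₃, hb₃, b₄, hb₄, heb⟩ := Finset.mem_sub.mp he₂
    obtain ⟨b₅, hb₅, b₆, hb₆, hec⟩ := Finset.mem_sub.mp he₃
    obtain ⟨b₁, hb₁, b₂, hb₂, hbu⟩ := Finset.mem_sub.mp huV
    refine ⟨B₁, hB₁B, Z, hZD, a₁, ha₁, a₂, ha₂, a₃, ha₃, a₄, ha₄, a₅, ha₅, a₆, ha₆,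
      b₁, hb₁, b₂, hb₂, b₃, hb₃, b₄, hb₄, b₅, hb₅, b₆, hb₆, ?_⟩
    have hc1 : b₁ - b₂ = u := hbu
    have hc2 : a₁ - a₂ + a₃ - a₄ = u := by
      linear_combination hda + hdb - hud
    have hc3 : a₅ - a₆ + b₃ - b₄ + b₅ - b₆ = e₁ + e₂ + e₃ := by
      linear_combination hea + heb + hec
    rw [hc1, hc2, hc3]
    exact hbound
  -- main dichotomy
  by_cases hcase : ∃ u ∈ B - B, ∃ d₁ ∈ A - A, ∃ d₂ ∈ A - A,
      ∃ e₁ ∈ A - A, ∃ e₂ ∈ B - B, ∃ e₃ ∈ B - B, u ≠ 0 ∧ u = d₁ + d₂ ∧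
      (∀ x ∈ A - A, ∀ y ∈ B₁ - B₁, ∀ t ∈ Z, ∀ t' ∈ Z, t ≠ t' →
        u * (x + y) ≠ (e₁ + e₂ + e₃) * (t - t'))
  · -- Case (a) : triple injectivity
    obtain ⟨u, huV, d₁, hd₁, d₂, hd₂, e₁, he₁, e₂, he₂, e₃, he₃, hu0, hud, hgood⟩ := hcase
    refine ⟨u, huV, d₁, hd₁, d₂, hd₂, e₁, he₁, e₂, he₂, e₃, he₃, hud, ?_⟩
    set e := e₁ + e₂ + e₃ with hedef
    have hinj : ∀ a ∈ A, ∀ b ∈ B₁, ∀ t ∈ Z, ∀ a' ∈ A, ∀ b' ∈ B₁, ∀ t' ∈ Z,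
        u*a + u*b + e*t = u*a' + u*b' + e*t' → a = a' ∧ b = b' ∧ t = t' := by
      intro a ha b hb t ht a' ha' b' hb' t' ht' heq
      by_cases htt : t = t'
      · subst htt
        have h2 : a + b = a' + b' := by
          have h3 : u * (a + b) = u * (a' + b') := by linear_combination heq
          exact mul_left_cancel₀ hu0 h3
        have hbb' : b = b' := by
          by_contra hne'
          have h3 : b' - b ∈ A - A := by
            have h4 : b' - b = a - a' := by linear_combination -h2
            rw [h4]
            exact Finset.sub_mem_sub ha ha'
          exact hindep b' hb' b hb (fun hh => hne' hh.symm) h3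
        subst hbb'
        exact ⟨by linear_combination h2, rfl, rfl⟩
      · exfalso
        apply hgood (a - a') (Finset.sub_mem_sub ha ha') (b - b') (Finset.sub_mem_sub hb hb')
          t' ht' t ht (fun hh => htt hh.symm)
        linear_combination heq
    have hcardS := card_triple_of_inj u e A B₁ Z hinj
    rw [hcardS]
    have hmin0 : (0:ℝ) ≤ min ((A.card : ℝ) * B.card) ((p : ℝ) - 1) := by
      apply le_min
      · positivity
      · have h2p : (2:ℝ) ≤ (p:ℝ) := by exact_mod_cast hp.two_le
        linarith
    have hnat : A.card * B.card ≤ A.card * B₁.card * Z.card := by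
      rw [hZcard]
      calc A.card * B.card ≤ A.card * (m₀ * B₁.card) := Nat.mul_le_mul_left _ hcount
        _ = A.card * B₁.card * m₀ := by ring
    calc (1/2:ℝ) * min ((A.card : ℝ) * B.card) ((p : ℝ) - 1)
        ≤ min ((A.card : ℝ) * B.card) ((p : ℝ) - 1) := by linarith
      _ ≤ (A.card : ℝ) * B.card := min_le_left _ _
      _ ≤ ((A.card * B₁.card * Z.card : ℕ) : ℝ) := by exact_mod_cast hnat
  · -- Case (b) : every admissible pair collides; representation of all slopes
    push_neg at hcase
    have key : ∀ n : ℕ, ∃ x ∈ A - A, ∃ v ∈ B₁ - B₁, ∃ u ∈ B - B, ∃ d₁ ∈ A - A, ∃ d₂ ∈ A - A,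
        u ≠ 0 ∧ u = d₁ + d₂ ∧ (n : ZMod p) * u = x + v := by
      intro n
      induction n with
      | zero =>
        exact ⟨0, h0W, 0, h0B₁, z, hzV, z, hzW, 0, h0W, hz0, by ring, by push_cast; ring⟩
      | succ n ih =>
        obtain ⟨x, hx, v, hv, u, huV, d₁, hd₁, d₂, hd₂, hu0, hud, hrep⟩ := ih
        have hvV : v ∈ B - B := by
          obtain ⟨c, hc, c', hc', rfl⟩ := Finset.mem_sub.mp hv
          exact Finset.sub_mem_sub (hB₁B hc) (hB₁B hc')
        obtain ⟨x', hx', y', hy', t, ht, t', ht', htt', heqc⟩ :=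
          hcase u huV d₁ hd₁ d₂ hd₂ x hx v hvV u huV hu0 hud
        refine ⟨x', hx', y', hy', t - t', hZdiffV t ht t' ht', t, hZW t ht,
          -t', hWsym t' (hZW t' ht'), sub_ne_zero.mpr htt', by ring, ?_⟩
        apply mul_left_cancel₀ hu0
        push_cast
        calc u * (((n:ZMod p)+1) * (t - t')) = ((n:ZMod p) * u + u) * (t - t') := by ring
          _ = (x + v + u) * (t - t') := by rw [hrep]
          _ = u * (x' + y') := heqc.symm
    have rep : ∀ μ : ZMod p, ∃ x ∈ A - A, ∃ v ∈ B₁ - B₁, ∃ u ∈ B - B,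
        ∃ d₁ ∈ A - A, ∃ d₂ ∈ A - A, u ≠ 0 ∧ u = d₁ + d₂ ∧ μ * u = x + v := by
      intro μ
      obtain ⟨x, hx, v, hv, u, huV, d₁, hd₁, d₂, hd₂, hu0, hud, hrep⟩ := key μ.val
      refine ⟨x, hx, v, hv, u, huV, d₁, hd₁, d₂, hd₂, hu0, hud, ?_⟩
      rwa [ZMod.natCast_val, ZMod.cast_id] at hrep
    -- perfect sumset A + B₁
    have hTcard : (A + B₁).card = A.card * B₁.card := by
      apply card_add_of_inj
      intro a ha b hb a' ha' b' hb' heq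
      have hbb' : b = b' := by
        by_contra hne'
        have h3 : b' - b ∈ A - A := by
          have h4 : b' - b = a - a' := by linear_combination -heq
          rw [h4]
          exact Finset.sub_mem_sub ha ha'
        exact hindep b' hb' b hb (fun hh => hne' hh.symm) h3
      subst hbb'
      exact ⟨by linear_combination heq, rfl⟩
    obtain ⟨ξ, hξ0, havg⟩ := avg_lemma p (A + B₁) Z (hAne.add ⟨bb, hbb⟩) hZne
    obtain ⟨x, hx, v, hv, u, huV, d₁, hd₁, d₂, hd₂, hu0, hud, hξu⟩ := rep ξ
    have hvV : v ∈ B - B := by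
      obtain ⟨c, hc, c', hc', rfl⟩ := Finset.mem_sub.mp hv
      exact Finset.sub_mem_sub (hB₁B hc) (hB₁B hc')
    refine ⟨u, huV, d₁, hd₁, d₂, hd₂, x, hx, v, hvV, 0, h0V, hud, ?_⟩
    have hSeq : u • A + u • B₁ + (x + v + 0) • Z = u • ((A + B₁) + ξ • Z) := by
      rw [smul_finset_add' u (A + B₁) (ξ • Z), smul_finset_add' u A B₁, smul_smul_finset']
      congr 1
      congr 1
      rw [add_zero, ← hξu]
      ring
    rw [hSeq, card_smul_finset' hu0]
    refine le_trans ?_ havg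
    apply mul_le_mul_of_nonneg_left ?_ (by norm_num : (0:ℝ) ≤ 1/2)
    apply min_le_min ?_ le_rfl
    have hnat2 : A.card * B.card ≤ (A + B₁).card * Z.card := by
      rw [hTcard, hZcard]
      calc A.card * B.card ≤ A.card * (m₀ * B₁.card) := Nat.mul_le_mul_left _ hcount
        _ = A.card * B₁.card * m₀ := by ring
    exact_mod_cast hnat2
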